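/- Let W be an (n,T(n))-weakly Ramsey non-P-point in standard position on ω×ω, let τ be any n-type, and let the set [ω×ω]_τ be partitioned into finitely many pieces. Then there is a set H ∈ W such that [H]_τ is included in one of the pieces. -/

import Mathlib

open Filter Set

/-- The vertical section of `A ⊆ ω × ω` at `n`. -/
def sec (A : Set (ℕ × ℕ)) (n : ℕ) : Set ℕ := {y | (n, y) ∈ A}

/-- Membership in the forcing poset `𝔓` of subsets of `ω × ω`. -/
def memP (A : Set (ℕ × ℕ)) : Prop :=
  {n | (sec A n).Infinite}.Infinite ∧
  (∀ n, (sec A n).Nonempty → (sec A n).Infinite) ∧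
  (∀ m n, m ≠ n → Disjoint (sec A m) (sec A n)) ∧
  (∀ p ∈ A, (p : ℕ × ℕ).1 < p.2) ∧
  (∀ p ∈ A, ∀ q ∈ A, (p : ℕ × ℕ).1 ≠ (q : ℕ × ℕ).2)

/-- A (nonprincipal) selective ultrafilter on ℕ. -/
def Selective (U : Ultrafilter ℕ) : Prop :=
  (U : Filter ℕ) ≤ Filter.cofinite ∧
  ∀ f : ℕ → ℕ, ∃ A ∈ U, Set.InjOn f A ∨ ∃ c, ∀ x ∈ A, f x = c

/-- Isomorphism of ultrafilters on ℕ via a permutation of ℕ. -/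
def UIso (V V' : Ultrafilter ℕ) : Prop :=
  ∃ f : Equiv.Perm ℕ, ∀ A : Set ℕ, (f : ℕ → ℕ) ⁻¹' A ∈ V ↔ A ∈ V'

/-- A sisnis ultrafilter: a selective-indexed sum of pairwise non-isomorphic
selective ultrafilters. -/
def Sisnis (W : Ultrafilter (ℕ × ℕ)) : Prop :=
  ∃ (U : Ultrafilter ℕ) (V : ℕ → Ultrafilter ℕ),
    Selective U ∧ (∀ n, Selective (V n)) ∧
    (∀ m n, m ≠ n → ¬ UIso (V m) (V n)) ∧
    ∀ A : Set (ℕ × ℕ), A ∈ W ↔ {n | sec A n ∈ V n} ∈ U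

/-- Formal symbols `x₁, …, xₙ` (left) and `y₁, …, yₙ` (right). -/
abbrev Symb (n : ℕ) := Fin n ⊕ Fin n

def symVal {n : ℕ} (a b : Fin n → ℕ) : Symb n → ℕ
  | Sum.inl i => a i
  | Sum.inr i => b i

/-- `τ` is an `n`-type: a linear pre-order of the symbols `x₁,…,xₙ,y₁,…,yₙ` with
`y₁ < ⋯ < yₙ`, each `xᵢ` strictly preceding `yᵢ`, and distinct equivalent symbols both `x`'s. -/
structure IsNType (n : ℕ) (τ : Symb n → Symb n → Prop) : Prop where
  refl : ∀ u, τ u u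
  trans : ∀ u v w, τ u v → τ v w → τ u w
  total : ∀ u v, τ u v ∨ τ v u
  y_lt : ∀ i j : Fin n, i < j → τ (Sum.inr i) (Sum.inr j) ∧ ¬ τ (Sum.inr j) (Sum.inr i)
  x_lt_y : ∀ i : Fin n, τ (Sum.inl i) (Sum.inr i) ∧ ¬ τ (Sum.inr i) (Sum.inl i)
  equiv_xx : ∀ u v, u ≠ v → τ u v → τ v u → (∃ i, u = Sum.inl i) ∧ (∃ j, v = Sum.inl j)

/-- `T n` is the number of `n`-types. -/
noncomputable def T (n : ℕ) : ℕ := Nat.card {τ : Symb n → Symb n → Prop // IsNType n τ}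

/-- An `n`-element subset of `ω × ω` realizes the `n`-type `τ`: listing it as
`{(a₁,b₁),…,(aₙ,bₙ)}` with `b₁ < ⋯ < bₙ`, interpreting `xᵢ` as `aᵢ` and `yᵢ` as `bᵢ`
makes the order and equality relations among the symbols exactly those of `τ`. -/
def Realizes {n : ℕ} (τ : Symb n → Symb n → Prop) (s : Set (ℕ × ℕ)) : Prop :=
  ∃ a b : Fin n → ℕ, StrictMono b ∧ s = Set.range (fun i => (a i, b i)) ∧
    ∀ u v : Symb n, τ u v ↔ symVal a b u ≤ symVal a b v

/-- An ultrafilter is `(n,t)`-weakly Ramsey if for every partition (coloring) of the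
`n`-element subsets into finitely many pieces there is `H` in the ultrafilter such that
the `n`-element subsets of `H` meet at most `t` pieces. -/
def WeaklyRamsey {α : Type} (U : Ultrafilter α) (n t : ℕ) : Prop :=
  ∀ (k : ℕ) (c : Set α → Fin k), ∃ H ∈ U,
    ({i : Fin k | ∃ s : Set α, s ⊆ H ∧ s.Finite ∧ s.ncard = n ∧ c s = i}).ncard ≤ t

/-- A non-P-point in standard position: a nonprincipal ultrafilter on `ω × ω` such that
the first projection is neither finite-to-one nor constant on any set of the ultrafilter. -/
def StdNonPpoint (W : Ultrafilter (ℕ × ℕ)) : Prop :=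
  (W : Filter (ℕ × ℕ)) ≤ Filter.cofinite ∧
  ∀ A ∈ W, (¬ ∀ m : ℕ, {p : ℕ × ℕ | p ∈ A ∧ p.1 = m}.Finite) ∧
    (¬ ∃ c : ℕ, ∀ p ∈ A, (p : ℕ × ℕ).1 = c)

/-- The three-functions property: every function on `ω × ω` is, on some set of the
ultrafilter, constant, or one-to-one, or `π₁` followed by a one-to-one function. -/
def ThreeFunctions (W : Ultrafilter (ℕ × ℕ)) : Prop :=
  ∀ f : ℕ × ℕ → ℕ, ∃ A ∈ W,
    (∃ c, ∀ p ∈ A, f p = c) ∨ Set.InjOn f A ∨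
    (∃ g : ℕ → ℕ, Function.Injective g ∧ ∀ p ∈ A, f p = g (p : ℕ × ℕ).1)

/-- `π₁` is a conservative map on `W` (combinatorial formulation). -/
def ConservativePi1 (W : Ultrafilter (ℕ × ℕ)) : Prop :=
  ∀ R : ℕ → ℕ → ℕ → Prop, ∃ S : ℕ → ℕ → Prop, ∀ f : ℕ → ℕ,
    ({p : ℕ × ℕ | R p.1 p.2 (f p.1)} ∈ W ↔ {x : ℕ | S x (f x)} ∈ W.map Prod.fst)

/-- Formal symbols `x₁, x₂, …` (left) and `y₁, y₂, …` (right). -/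
abbrev OSym := ℕ ⊕ ℕ

def osymVal (a b : ℕ → ℕ) : OSym → ℕ
  | Sum.inl i => a i
  | Sum.inr i => b i

/-- `τ` is an ω-type. -/
structure IsOmegaType (τ : OSym → OSym → Prop) : Prop where
  /-- `τ` is a linear pre-order whose quotient linear order has order type ω. -/
  rank : ∃ r : OSym → ℕ, Function.Surjective r ∧ ∀ u v, τ u v ↔ r u ≤ r v
  y_lt : ∀ i j : ℕ, i < j → τ (Sum.inr i) (Sum.inr j) ∧ ¬ τ (Sum.inr j) (Sum.inr i)
  x_le_y : ∀ i : ℕ, τ (Sum.inl i) (Sum.inr i)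
  /-- no equivalence class contains both an `x` and a `y` -/
  x_not_equiv_y : ∀ i j : ℕ, ¬ (τ (Sum.inl i) (Sum.inr j) ∧ τ (Sum.inr j) (Sum.inl i))
  /-- every class of an `x` contains infinitely many `x`'s -/
  x_class_infinite : ∀ i : ℕ,
    {j : ℕ | τ (Sum.inl i) (Sum.inl j) ∧ τ (Sum.inl j) (Sum.inl i)}.Infinite
  /-- there are infinitely many equivalence classes of `x`'s -/
  x_classes_infinite : ∀ F : Finset ℕ, ∃ i : ℕ, ∀ j ∈ F,
    ¬ (τ (Sum.inl i) (Sum.inl j) ∧ τ (Sum.inl j) (Sum.inl i))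

/-- An element of `𝔓` realizes the ω-type `τ`. -/
def RealizesOmega (τ : OSym → OSym → Prop) (A : Set (ℕ × ℕ)) : Prop :=
  ∃ a b : ℕ → ℕ, StrictMono b ∧ A = Set.range (fun i => (a i, b i)) ∧
    ∀ u v : OSym, τ u v ↔ osymVal a b u ≤ osymVal a b v

/-- `𝔓_τ`: the elements of `𝔓` realizing the ω-type `τ`. -/
def Ptau (τ : OSym → OSym → Prop) : Set (Set (ℕ × ℕ)) :=
  {A | memP A ∧ RealizesOmega τ A}

open Classical in
/-- The identification of `𝒫(ω × ω)` with the product space `2^(ω×ω)`. -/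
noncomputable def chi (A : Set (ℕ × ℕ)) : (ℕ × ℕ) → Bool :=
  fun p => if p ∈ A then true else false

def vertRank : Symb 2 → ℕ
  | Sum.inl _ => 0
  | Sum.inr i => (i : ℕ) + 1

/-- The 2-type `x₁ = x₂ < y₁ < y₂` of pairs lying in one vertical column. -/
def vertType (u v : Symb 2) : Prop := vertRank u ≤ vertRank v

/-! ### Auxiliary machinery for `stmt1` -/

section Stmt1Aux

variable {n : ℕ}

/-- The rank of a symbol under a linear preorder: the number of symbols strictly below it. -/
noncomputable def trank (τ : Symb n → Symb n → Prop) (u : Symb n) : ℕ :=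
  {v | τ v u ∧ ¬ τ u v}.ncard

lemma trank_le_iff (τ : Symb n → Symb n → Prop) (hτ : IsNType n τ) (u v : Symb n) :
    τ u v ↔ trank τ u ≤ trank τ v := by
  constructor
  · intro h
    apply Set.ncard_le_ncard _ (Set.toFinite _)
    rintro w ⟨hw1, hw2⟩
    exact ⟨hτ.trans _ _ _ hw1 h, fun hvw => hw2 (hτ.trans _ _ _ h hvw)⟩
  · intro h
    by_contra hne
    have hvu : τ v u := (hτ.total u v).resolve_left hne
    have hss : {w | τ w v ∧ ¬ τ v w} ⊂ {w | τ w u ∧ ¬ τ u w} := by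
      constructor
      · rintro w ⟨hw1, hw2⟩
        exact ⟨hτ.trans _ _ _ hw1 hvu, fun huw => hw2 (hτ.trans _ _ _ hvu huw)⟩
      · intro hsup
        exact (hsup ⟨hvu, hne⟩).2 (hτ.refl v)
    have hlt := Set.ncard_lt_ncard hss (Set.toFinite _)
    exact absurd h (not_le.2 hlt)

lemma trank_le (τ : Symb n → Symb n → Prop) (u : Symb n) : trank τ u ≤ 2 * n := by
  have h1 : trank τ u ≤ (Set.univ : Set (Symb n)).ncard :=
    Set.ncard_le_ncard (Set.subset_univ _) Set.finite_univ
  rw [Set.ncard_univ, Nat.card_sum, Nat.card_eq_fintype_card, Fintype.card_fin] at h1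
  omega

lemma trank_xy_ne (τ : Symb n → Symb n → Prop) (hτ : IsNType n τ) (i j : Fin n) :
    trank τ (Sum.inl i) ≠ trank τ (Sum.inr j) := by
  intro h
  have h1 : τ (Sum.inl i) (Sum.inr j) := (trank_le_iff τ hτ _ _).2 h.le
  have h2 : τ (Sum.inr j) (Sum.inl i) := (trank_le_iff τ hτ _ _).2 h.ge
  obtain ⟨_, ⟨j', hj'⟩⟩ := hτ.equiv_xx _ _ (by simp) h1 h2
  simp at hj'

lemma trank_y_lt (τ : Symb n → Symb n → Prop) (hτ : IsNType n τ) {i j : Fin n} (hij : i < j) :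
    trank τ (Sum.inr i) < trank τ (Sum.inr j) := by
  have := (hτ.y_lt i j hij).2
  have h2 := (trank_le_iff τ hτ (Sum.inr j) (Sum.inr i)).not.1 this
  omega

lemma trank_x_lt_y (τ : Symb n → Symb n → Prop) (hτ : IsNType n τ) (i : Fin n) :
    trank τ (Sum.inl i) < trank τ (Sum.inr i) := by
  have := (hτ.x_lt_y i).2
  have h2 := (trank_le_iff τ hτ (Sum.inr i) (Sum.inl i)).not.1 this
  omega

/-- In every set of a non-P-point in standard position, infinitely many columns have
infinite sections. -/
lemma heavy_infinite (W : Ultrafilter (ℕ × ℕ)) (hstd : StdNonPpoint W)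
    {A : Set (ℕ × ℕ)} (hA : A ∈ W) : {m | (sec A m).Infinite}.Infinite := by
  by_contra hfin
  rw [Set.not_infinite] at hfin
  have hcol : ∀ m : ℕ, {p : ℕ × ℕ | p.1 = m} ∉ W := by
    intro m hm
    exact (hstd.2 _ hm).2 ⟨m, fun p hp => hp⟩
  have h1 : {p : ℕ × ℕ | p.1 ∉ hfin.toFinset} ∈ W := by
    have he : {p : ℕ × ℕ | p.1 ∉ hfin.toFinset} =
        ⋂ m ∈ hfin.toFinset, {p : ℕ × ℕ | p.1 = m}ᶜ := by
      ext p
      simp only [Set.mem_setOf_eq, Set.mem_iInter, Set.mem_compl_iff]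
      constructor
      · intro h m hm hpm
        exact h (hpm ▸ hm)
      · intro h hp
        exact h _ hp rfl
    rw [he]
    exact (Filter.biInter_finset_mem _).2 fun m _ =>
      (Ultrafilter.compl_mem_iff_notMem).2 (hcol m)
  have hA' : A ∩ {p : ℕ × ℕ | p.1 ∉ hfin.toFinset} ∈ W := Filter.inter_mem hA h1
  obtain ⟨m, hm'⟩ := not_forall.mp (hstd.2 _ hA').1
  have hm : {p : ℕ × ℕ | p ∈ A ∩ {p : ℕ × ℕ | p.1 ∉ hfin.toFinset} ∧ p.1 = m}.Infinite := hm'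
  have hinj : Set.InjOn Prod.snd {p : ℕ × ℕ | p ∈ A ∩ {p : ℕ × ℕ | p.1 ∉ hfin.toFinset} ∧ p.1 = m} := by
    rintro ⟨a1, a2⟩ ⟨ha, ha1⟩ ⟨b1, b2⟩ ⟨hb, hb1⟩ h
    simp_all
  have himg : (Prod.snd '' {p : ℕ × ℕ | p ∈ A ∩ {p : ℕ × ℕ | p.1 ∉ hfin.toFinset} ∧ p.1 = m}).Infinite :=
    hm.image hinj
  have hsub : Prod.snd '' {p : ℕ × ℕ | p ∈ A ∩ {p : ℕ × ℕ | p.1 ∉ hfin.toFinset} ∧ p.1 = m}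
      ⊆ sec A m := by
    rintro y ⟨⟨p1, p2⟩, ⟨⟨hp, -⟩, hp1⟩, rfl⟩
    have hp1' : p1 = m := hp1
    subst hp1'
    exact hp
  have hmM : m ∈ {m | (sec A m).Infinite} := himg.mono hsub
  obtain ⟨p, ⟨⟨-, hpF⟩, hp1⟩⟩ := hm.nonempty
  exact hpF (by simpa [hp1] using hfin.mem_toFinset.2 hmM)

/-- Any set whose heavy-column set is infinite contains a realization of every `n`-type. -/
lemma exists_realizes {A : Set (ℕ × ℕ)}
    (hM : {m | (sec A m).Infinite}.Infinite)
    (τ : Symb n → Symb n → Prop) (hτ : IsNType n τ) :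
    ∃ s ⊆ A, Realizes τ s := by
  classical
  set M := {m | (sec A m).Infinite} with hMdef
  obtain ⟨r, hiff, hrle, hrxyne, hryy, hrxy⟩ :
      ∃ r : Symb n → ℕ, (∀ u v, τ u v ↔ r u ≤ r v) ∧ (∀ u, r u ≤ 2 * n) ∧
        (∀ i j : Fin n, r (Sum.inl i) ≠ r (Sum.inr j)) ∧
        (∀ i j : Fin n, i < j → r (Sum.inr i) < r (Sum.inr j)) ∧
        (∀ i : Fin n, r (Sum.inl i) < r (Sum.inr i)) :=
    ⟨trank τ, trank_le_iff τ hτ, trank_le τ, trank_xy_ne τ hτ,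
      fun i j h => trank_y_lt τ hτ h, trank_x_lt_y τ hτ⟩
  have key : ∀ t : ℕ, ∃ v : ℕ → ℕ,
      (∀ s s' : ℕ, s < s' → s' ≤ t → v s < v s') ∧
      (∀ s ≤ t, (∀ i : Fin n, r (Sum.inr i) = s → v s ∈ sec A (v (r (Sum.inl i)))) ∧
        ((∀ i : Fin n, r (Sum.inr i) ≠ s) → v s ∈ M)) := by
    intro t
    induction t with
    | zero =>
      obtain ⟨m, hm⟩ := hM.nonempty
      refine ⟨fun _ => m, fun s s' h h' => absurd (h.trans_le h') (by omega), ?_⟩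
      intro s hs
      constructor
      · intro i hi
        have := hrxy i
        omega
      · intro _
        exact hm
    | succ t ih =>
      obtain ⟨v, hv1, hv2⟩ := ih
      have hvle : ∀ s ≤ t, v s ≤ v t := by
        intro s hs
        rcases eq_or_lt_of_le hs with h | h
        · rw [h]
        · exact (hv1 s t h le_rfl).le
      by_cases hex : ∃ i : Fin n, r (Sum.inr i) = t + 1
      · obtain ⟨i, hi⟩ := hex
        have hxle : r (Sum.inl i) ≤ t := by
          have := hrxy i
          omega
        have hcol : v (r (Sum.inl i)) ∈ M :=
          (hv2 _ hxle).2 fun j hj => hrxyne i j hj.symm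
        obtain ⟨y, hy, hylt⟩ := Set.Infinite.exists_gt hcol (v t)
        refine ⟨Function.update v (t + 1) y, ?_, ?_⟩
        · intro s s' hss' hs'le
          rcases Nat.lt_succ_iff_lt_or_eq.1 (Nat.lt_succ_of_le hs'le) with h | h
          · rw [Function.update_of_ne (by omega), Function.update_of_ne (by omega)]
            exact hv1 s s' hss' (by omega)
          · subst h
            rw [Function.update_of_ne (by omega), Function.update_self]
            exact lt_of_le_of_lt (hvle s (by omega)) hylt
        · intro s hs
          rcases Nat.lt_succ_iff_lt_or_eq.1 (Nat.lt_succ_of_le hs) with h | h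
          · have hsle : s ≤ t := by omega
            constructor
            · intro j hj
              have hj' := hrxy j
              rw [Function.update_of_ne (by omega), Function.update_of_ne (by omega)]
              exact (hv2 s hsle).1 j hj
            · intro hj
              rw [Function.update_of_ne (by omega)]
              exact (hv2 s hsle).2 hj
          · constructor
            · intro j hj
              have hji : j = i := by
                by_contra hne
                rcases lt_or_gt_of_ne hne with hlt | hlt
                · have := hryy j i hlt
                  omega
                · have := hryy i j hlt
                  omega
              subst hji
              rw [h, Function.update_self, Function.update_of_ne (by omega)]
              exact hy
            · intro hall
              exact absurd (hi.trans h.symm) (hall i)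
      · push_neg at hex
        obtain ⟨m, hmM, hmlt⟩ := Set.Infinite.exists_gt hM (v t)
        refine ⟨Function.update v (t + 1) m, ?_, ?_⟩
        · intro s s' hss' hs'le
          rcases Nat.lt_succ_iff_lt_or_eq.1 (Nat.lt_succ_of_le hs'le) with h | h
          · rw [Function.update_of_ne (by omega), Function.update_of_ne (by omega)]
            exact hv1 s s' hss' (by omega)
          · subst h
            rw [Function.update_of_ne (by omega), Function.update_self]
            exact lt_of_le_of_lt (hvle s (by omega)) hmlt
        · intro s hs
          rcases Nat.lt_succ_iff_lt_or_eq.1 (Nat.lt_succ_of_le hs) with h | h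
          · have hsle : s ≤ t := by omega
            constructor
            · intro j hj
              have hj' := hrxy j
              rw [Function.update_of_ne (by omega), Function.update_of_ne (by omega)]
              exact (hv2 s hsle).1 j hj
            · intro hj
              rw [Function.update_of_ne (by omega)]
              exact (hv2 s hsle).2 hj
          · constructor
            · intro j hj
              exact absurd (hj.trans h) (hex j)
            · intro _
              rw [h, Function.update_self]
              exact hmM
  obtain ⟨v, hv1, hv2⟩ := key (2 * n)
  have hmono : ∀ p q, p ≤ 2 * n → q ≤ 2 * n → (v p ≤ v q ↔ p ≤ q) := by
    intro p q hp hq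
    constructor
    · intro h
      by_contra hpq
      exact absurd h (not_le.2 (hv1 q p (by omega) hp))
    · intro h
      rcases eq_or_lt_of_le h with h | h
      · rw [h]
      · exact (hv1 p q h hq).le
  set a : Fin n → ℕ := fun i => v (r (Sum.inl i)) with ha
  set b : Fin n → ℕ := fun i => v (r (Sum.inr i)) with hb
  have hsym : ∀ u, symVal a b u = v (r u) := by rintro (i | i) <;> rfl
  refine ⟨Set.range (fun i : Fin n => (a i, b i)), ?_, a, b, ?_, rfl, ?_⟩
  · rintro p ⟨i, rfl⟩
    exact (hv2 (r (Sum.inr i)) (hrle _)).1 i rfl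
  · intro i j hij
    exact hv1 _ _ (hryy i j hij) (hrle _)
  · intro u w
    rw [hiff, hsym, hsym, hmono _ _ (hrle _) (hrle _)]

lemma realizes_finite_ncard {τ : Symb n → Symb n → Prop} {s : Set (ℕ × ℕ)}
    (h : Realizes τ s) : s.Finite ∧ s.ncard = n := by
  obtain ⟨a, b, hb, rfl, -⟩ := h
  refine ⟨Set.finite_range _, ?_⟩
  have hinj : Function.Injective (fun i : Fin n => (a i, b i)) := fun i j hij =>
    hb.injective (congrArg Prod.snd hij)
  rw [← Set.image_univ, Set.ncard_image_of_injective _ hinj, Set.ncard_univ]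
  simp

lemma strictMono_fin_range_eq {b b' : Fin n → ℕ} (hb : StrictMono b) (hb' : StrictMono b')
    (h : Set.range b = Set.range b') : b = b' := by
  classical
  set sF := Finset.image b Finset.univ with hsF
  have hcard : sF.card = n := by
    rw [hsF, Finset.card_image_of_injective _ hb.injective, Finset.card_univ, Fintype.card_fin]
  have hmem : ∀ i, b i ∈ sF := fun i => Finset.mem_image_of_mem _ (Finset.mem_univ i)
  have hmem' : ∀ i, b' i ∈ sF := by
    intro i
    have : b' i ∈ Set.range b := h ▸ ⟨i, rfl⟩
    obtain ⟨j, hj⟩ := this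
    exact hj ▸ hmem j
  have h1 : b = sF.orderEmbOfFin hcard := Finset.orderEmbOfFin_unique hcard hmem hb
  have h2 : b' = sF.orderEmbOfFin hcard := Finset.orderEmbOfFin_unique hcard hmem' hb'
  rw [h1, h2]

lemma realizes_unique {τ₁ τ₂ : Symb n → Symb n → Prop} {s : Set (ℕ × ℕ)}
    (h1 : Realizes τ₁ s) (h2 : Realizes τ₂ s) : τ₁ = τ₂ := by
  obtain ⟨a, b, hb, hs1, hiff1⟩ := h1
  obtain ⟨a', b', hb', hs2, hiff2⟩ := h2
  have hrange : Set.range (fun i : Fin n => (a i, b i)) =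
      Set.range (fun i : Fin n => (a' i, b' i)) := hs1 ▸ hs2
  have hbr : Set.range b = Set.range b' := by
    have : Prod.snd '' Set.range (fun i : Fin n => (a i, b i)) =
        Prod.snd '' Set.range (fun i : Fin n => (a' i, b' i)) := by rw [hrange]
    simpa [← Set.range_comp, Function.comp_def] using this
  have hbeq : b = b' := strictMono_fin_range_eq hb hb' hbr
  have haeq : a = a' := by
    funext i
    have : (a i, b i) ∈ Set.range (fun i : Fin n => (a' i, b' i)) := hrange ▸ ⟨i, rfl⟩
    obtain ⟨j, hj⟩ := this
    have hji : j = i := hb'.injective (by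
      have := congrArg Prod.snd hj
      simpa [← hbeq] using this)
    have := congrArg Prod.fst hj
    simp [hji] at this
    exact this.symm
  funext u w
  exact propext ((hiff1 u w).trans (by rw [hbeq, haeq]; exact (hiff2 u w).symm))

end Stmt1Aux

/-- type homogeneity for (n,T(n))-weakly Ramsey non-P-points in
standard position. -/
theorem stmt1 (n : ℕ) (W : Ultrafilter (ℕ × ℕ)) (hstd : StdNonPpoint W)
    (hwr : WeaklyRamsey W n (T n)) (τ : Symb n → Symb n → Prop) (hτ : IsNType n τ)
    (k : ℕ) (c : Set (ℕ × ℕ) → Fin k) :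
    ∃ H ∈ W, ∃ i : Fin k, ∀ s : Set (ℕ × ℕ), s ⊆ H → Realizes τ s → c s = i := by
  classical
  rcases k with _ | k
  · exact (c ∅).elim0
  obtain ⟨K, ⟨e⟩⟩ := Finite.exists_equiv_fin
    ({τ' : Symb n → Symb n → Prop // IsNType n τ'} × Fin (k + 1))
  set typeOf : Set (ℕ × ℕ) → {τ' : Symb n → Symb n → Prop // IsNType n τ'} := fun s =>
    if h : ∃ τ' : {τ' : Symb n → Symb n → Prop // IsNType n τ'}, Realizes τ'.1 s
    then h.choose else ⟨τ, hτ⟩ with htypeOf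
  have htype : ∀ (τ' : {τ' : Symb n → Symb n → Prop // IsNType n τ'}) s,
      Realizes τ'.1 s → typeOf s = τ' := by
    intro τ' s hs
    have h : ∃ τ'' : {τ' : Symb n → Symb n → Prop // IsNType n τ'}, Realizes τ''.1 s := ⟨τ', hs⟩
    rw [htypeOf]
    simp only [dif_pos h]
    exact Subtype.ext (realizes_unique h.choose_spec hs)
  set d : Set (ℕ × ℕ) → Fin K := fun s => e (typeOf s, c s) with hd
  obtain ⟨H, hHW, hHcount⟩ := hwr K d
  set Colors := {i : Fin K | ∃ s : Set (ℕ × ℕ), s ⊆ H ∧ s.Finite ∧ s.ncard = n ∧ d s = i}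
    with hColors
  have hreal : ∀ τ' : {τ' : Symb n → Symb n → Prop // IsNType n τ'},
      ∃ s, s ⊆ H ∧ Realizes τ'.1 s := by
    intro τ'
    obtain ⟨s, hs1, hs2⟩ := exists_realizes (heavy_infinite W hstd hHW) τ'.1 τ'.2
    exact ⟨s, hs1, hs2⟩
  choose S hS1 hS2 using hreal
  set φ : {τ' : Symb n → Symb n → Prop // IsNType n τ'} → Fin K :=
    fun τ' => e (τ', c (S τ')) with hφ
  have hmemCol : ∀ τ', φ τ' ∈ Colors := by
    intro τ'
    refine ⟨S τ', hS1 τ', (realizes_finite_ncard (hS2 τ')).1,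
      (realizes_finite_ncard (hS2 τ')).2, ?_⟩
    rw [hd]
    simp only [htype τ' _ (hS2 τ')]
    rfl
  have hinj : Function.Injective φ := by
    intro τ₁ τ₂ h
    have h2 := e.injective h
    injection h2
  have hrsub : Set.range φ ⊆ Colors := by
    rintro i ⟨τ', rfl⟩
    exact hmemCol τ'
  have hTcard : (Set.range φ).ncard = T n := by
    rw [← Set.image_univ, Set.ncard_image_of_injective _ hinj, Set.ncard_univ]
    rfl
  have hEq : Set.range φ = Colors := by
    apply Set.eq_of_subset_of_ncard_le hrsub _ (Set.toFinite _)
    rw [hTcard]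
    exact hHcount
  refine ⟨H, hHW, c (S ⟨τ, hτ⟩), ?_⟩
  intro s hsH hsreal
  have hmem : d s ∈ Colors :=
    ⟨s, hsH, (realizes_finite_ncard hsreal).1, (realizes_finite_ncard hsreal).2, rfl⟩
  rw [← hEq] at hmem
  obtain ⟨τ'', hτ''⟩ := hmem
  have hds : d s = e (⟨τ, hτ⟩, c s) := by
    rw [hd]
    simp only [htype ⟨τ, hτ⟩ s hsreal]
  rw [hφ, hds] at hτ''
  have h2 := e.injective hτ''
  injection h2 with h1 h1'
  rw [← h1', h1]
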